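/- (Kato's lemma) Let H be a real Hilbert space and P : H → H a bounded linear idempotent operator (P² = P) with P ≠ 0 and P ≠ id. Then ‖id − P‖ = ‖P‖ (operator norms). -/

import Mathlib

open ContinuousLinearMap in
lemma kato_aux {H : Type*} [NormedAddCommGroup H] [InnerProductSpace ℝ H]
    (P : H →L[ℝ] H) (hP : ∀ x, P (P x) = P x) (hnorm : 1 ≤ ‖P‖) (x : H) :
    ‖x - P x‖ ≤ ‖P‖ * ‖x‖ := by
  set u := P x with hu
  set v := x - P x with hv
  have hPu : P u = u := hP x
  have hPv : P v = (0 : H) := by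
    simp [hv, map_sub, hP x]
  by_cases h : u = 0
  · have hvx : v = x := by simp [hv, ← hu, h]
    rw [hvx]
    nlinarith [norm_nonneg x]
  · have ha : (0:ℝ) < ‖u‖ := norm_pos_iff.mpr h
    by_cases hb0 : v = 0
    · rw [hb0]
      simp only [norm_zero]
      positivity
    · have hb : (0:ℝ) < ‖v‖ := norm_pos_iff.mpr hb0
      set y := (‖v‖^2) • u + (‖u‖^2) • v with hy
      have hPy : P y = (‖v‖^2) • u := by
        simp [hy, map_add, map_smul, hPu, hPv]
      have hxuv : x = u + v := by simp [hv, hu]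
      have e1 : ‖y‖^2 = (‖v‖^2)^2*‖u‖^2 + 2*(‖v‖^2*‖u‖^2)*(inner ℝ u v : ℝ)
          + (‖u‖^2)^2*‖v‖^2 := by
        rw [hy, norm_add_sq_real]
        rw [norm_smul, norm_smul, real_inner_smul_left, real_inner_smul_right]
        simp [abs_of_nonneg (sq_nonneg ‖u‖), abs_of_nonneg (sq_nonneg ‖v‖)]
        ring
      have e2 : ‖x‖^2 = ‖u‖^2 + 2*(inner ℝ u v : ℝ) + ‖v‖^2 := by
        rw [hxuv, norm_add_sq_real]
      have hy2 : ‖y‖^2 = (‖u‖*‖v‖*‖x‖)^2 := by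
        rw [e1]; linear_combination (-(‖u‖^2*‖v‖^2)) * e2
      have hynorm : ‖y‖ = ‖u‖*‖v‖*‖x‖ :=
        (pow_left_inj₀ (norm_nonneg y) (by positivity) two_ne_zero).mp hy2
      have key : ‖P y‖ ≤ ‖P‖ * ‖y‖ := P.le_opNorm y
      have hPynorm : ‖P y‖ = ‖v‖^2 * ‖u‖ := by
        rw [hPy, norm_smul]
        simp [abs_of_nonneg (sq_nonneg ‖v‖)]
      rw [hPynorm, hynorm] at key
      nlinarith [mul_pos ha hb, norm_nonneg x, norm_nonneg P]

lemma kato_norm_ge {H : Type*} [NormedAddCommGroup H] [InnerProductSpace ℝ H]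
    (P : H →L[ℝ] H) (hP : P ∘L P = P) (h0 : P ≠ 0) : 1 ≤ ‖P‖ := by
  have h : ‖P‖ ≤ ‖P‖ * ‖P‖ := by
    calc ‖P‖ = ‖P ∘L P‖ := by rw [hP]
    _ ≤ ‖P‖ * ‖P‖ := ContinuousLinearMap.opNorm_comp_le _ _
  have hpos : 0 < ‖P‖ := norm_pos_iff.mpr h0
  nlinarith

/-- Kato's lemma: a bounded idempotent `P ≠ 0, id` on a real Hilbert space
satisfies `‖id - P‖ = ‖P‖`. -/
theorem kato_lemma {H : Type*} [NormedAddCommGroup H] [InnerProductSpace ℝ H]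
    [CompleteSpace H] (P : H →L[ℝ] H) (hP : P ∘L P = P)
    (h0 : P ≠ 0) (h1 : P ≠ ContinuousLinearMap.id ℝ H) :
    ‖ContinuousLinearMap.id ℝ H - P‖ = ‖P‖ := by
  set Q := ContinuousLinearMap.id ℝ H - P with hQdef
  have hPx : ∀ x, P (P x) = P x := fun x =>
    congrFun (congrArg DFunLike.coe hP) x
  have hQx : ∀ x, Q x = x - P x := fun x => rfl
  have hQ : Q ∘L Q = Q := by
    ext x
    simp [hQdef, map_sub, hPx x]
  have hQ0 : Q ≠ 0 := by
    intro hc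
    apply h1
    have := sub_eq_zero.mp hc
    exact this.symm
  have hQQx : ∀ x, Q (Q x) = Q x := fun x =>
    congrFun (congrArg DFunLike.coe hQ) x
  have hNP : 1 ≤ ‖P‖ := kato_norm_ge P hP h0
  have hNQ : 1 ≤ ‖Q‖ := kato_norm_ge Q hQ hQ0
  have le1 : ‖Q‖ ≤ ‖P‖ := by
    refine ContinuousLinearMap.opNorm_le_bound _ (by positivity) fun x => ?_
    simpa [hQx] using kato_aux P hPx hNP x
  have le2 : ‖P‖ ≤ ‖Q‖ := by
    refine ContinuousLinearMap.opNorm_le_bound _ (by positivity) fun x => ?_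
    have := kato_aux Q hQQx hNQ x
    have hPQ : P x = x - Q x := by simp [hQx]
    rw [hPQ]
    exact this
  linarith
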